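/- Let n̂, p̂, q̂ be C¹ orthonormal right-handed vector fields on an open set of ℝ³ satisfying the frame equations (p̂·∇)p̂ = β q̂ − (s/2 + Δ₁) n̂, (q̂·∇)q̂ = −(s/2 − Δ₁) n̂ − γ p̂, (p̂·∇)q̂ = −β p̂ − (t/2 + Δ₂) n̂, and (q̂·∇)p̂ = γ q̂ + (t/2 − Δ₂) n̂, with constant coefficients satisfying s = 2Δ₁, t = −2Δ₂, and β Δ₂ − γ Δ₁ = 0, where Δ² := Δ₁² + Δ₂² ≠ 0. Then the unit vector field P̂₂ = (Δ₂ p̂ − Δ₁ q̂)/Δ satisfies (P̂₂·∇)P̂₂ = 0, i.e., its integral curves are straight lines. -/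

import Mathlib

noncomputable section

abbrev E3 : Type := EuclideanSpace ℝ (Fin 3)

def e3 (a b c : ℝ) : E3 := (WithLp.equiv 2 (Fin 3 → ℝ)).symm ![a, b, c]

def dot3 (a b : E3) : ℝ := a 0 * b 0 + a 1 * b 1 + a 2 * b 2

def cross3 (a b : E3) : E3 :=
  e3 (a 1 * b 2 - a 2 * b 1) (a 2 * b 0 - a 0 * b 2) (a 0 * b 1 - a 1 * b 0)

def pd3 (i : Fin 3) (f : E3 → ℝ) (x : E3) : ℝ :=
  fderiv ℝ f x (EuclideanSpace.single i 1)

def grad3 (f : E3 → ℝ) (x : E3) : E3 := e3 (pd3 0 f x) (pd3 1 f x) (pd3 2 f x)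

def div3 (v : E3 → E3) (x : E3) : ℝ :=
  pd3 0 (fun y => v y 0) x + pd3 1 (fun y => v y 1) x + pd3 2 (fun y => v y 2) x

def curl3 (v : E3 → E3) (x : E3) : E3 :=
  e3 (pd3 1 (fun y => v y 2) x - pd3 2 (fun y => v y 1) x)
     (pd3 2 (fun y => v y 0) x - pd3 0 (fun y => v y 2) x)
     (pd3 0 (fun y => v y 1) x - pd3 1 (fun y => v y 0) x)

def dirD3 (a : E3) (v : E3 → E3) (x : E3) : E3 :=
  e3 (fderiv ℝ (fun y => v y 0) x a) (fderiv ℝ (fun y => v y 1) x a)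
     (fderiv ℝ (fun y => v y 2) x a)


lemma dirD3_apply' (a : E3) (v : E3 → E3) (x : E3) (i : Fin 3) :
    dirD3 a v x i = fderiv ℝ (fun y => v y i) x a := by
  fin_cases i <;> rfl

theorem stmt_17 (U : Set E3) (hU : IsOpen U) (n p q : E3 → E3)
    (hp : ∀ x ∈ U, DifferentiableAt ℝ p x)
    (hq : ∀ x ∈ U, DifferentiableAt ℝ q x)
    (hnn : ∀ x ∈ U, dot3 (n x) (n x) = 1)
    (hpp : ∀ x ∈ U, dot3 (p x) (p x) = 1)
    (hqq : ∀ x ∈ U, dot3 (q x) (q x) = 1)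
    (hnp : ∀ x ∈ U, dot3 (n x) (p x) = 0)
    (hnq : ∀ x ∈ U, dot3 (n x) (q x) = 0)
    (hpq : ∀ x ∈ U, dot3 (p x) (q x) = 0)
    (hright : ∀ x ∈ U, n x = cross3 (p x) (q x))
    (s t Δ₁ Δ₂ β γ : ℝ)
    (hΔ : Δ₁ ^ 2 + Δ₂ ^ 2 ≠ 0)
    (hs : s = 2 * Δ₁) (ht : t = -2 * Δ₂) (hβγ : β * Δ₂ - γ * Δ₁ = 0)
    (hfr1 : ∀ x ∈ U, dirD3 (p x) p x = β • q x - (s / 2 + Δ₁) • n x)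
    (hfr2 : ∀ x ∈ U, dirD3 (q x) q x = -(s / 2 - Δ₁) • n x - γ • p x)
    (hfr3 : ∀ x ∈ U, dirD3 (p x) q x = -β • p x - (t / 2 + Δ₂) • n x)
    (hfr4 : ∀ x ∈ U, dirD3 (q x) p x = γ • q x + (t / 2 - Δ₂) • n x)
    (P₂ : E3 → E3)
    (hP₂ : P₂ = fun x => (Real.sqrt (Δ₁ ^ 2 + Δ₂ ^ 2))⁻¹ • (Δ₂ • p x - Δ₁ • q x)) :
    ∀ x ∈ U, dirD3 (P₂ x) P₂ x = 0 := by
  subst hs ht hP₂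
  intro x hx
  set c : ℝ := (Real.sqrt (Δ₁ ^ 2 + Δ₂ ^ 2))⁻¹ with hc
  have hpx := hp x hx
  have hqx := hq x hx
  have hdp : ∀ i : Fin 3, DifferentiableAt ℝ (fun y => p y i) x := fun i =>
    (EuclideanSpace.proj i : E3 →L[ℝ] ℝ).differentiableAt.comp x hpx
  have hdq : ∀ i : Fin 3, DifferentiableAt ℝ (fun y => q y i) x := fun i =>
    (EuclideanSpace.proj i : E3 →L[ℝ] ℝ).differentiableAt.comp x hqx
  -- componentwise frame equations
  have frp : ∀ i : Fin 3, fderiv ℝ (fun y => p y i) x (p x)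
      = β * q x i - (2 * Δ₁ / 2 + Δ₁) * n x i := by
    intro i
    have h := congrArg (fun v : E3 => v i) (hfr1 x hx)
    rw [dirD3_apply'] at h
    simpa [PiLp.smul_apply, PiLp.sub_apply, smul_eq_mul] using h
  have frq : ∀ i : Fin 3, fderiv ℝ (fun y => q y i) x (q x)
      = -(2 * Δ₁ / 2 - Δ₁) * n x i - γ * p x i := by
    intro i
    have h := congrArg (fun v : E3 => v i) (hfr2 x hx)
    rw [dirD3_apply'] at h
    simpa [PiLp.smul_apply, PiLp.sub_apply, smul_eq_mul] using h
  have frqp : ∀ i : Fin 3, fderiv ℝ (fun y => q y i) x (p x)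
      = -β * p x i - (-2 * Δ₂ / 2 + Δ₂) * n x i := by
    intro i
    have h := congrArg (fun v : E3 => v i) (hfr3 x hx)
    rw [dirD3_apply'] at h
    simpa [PiLp.smul_apply, PiLp.sub_apply, PiLp.add_apply, smul_eq_mul] using h
  have frpq : ∀ i : Fin 3, fderiv ℝ (fun y => p y i) x (q x)
      = γ * q x i + (-2 * Δ₂ / 2 - Δ₂) * n x i := by
    intro i
    have h := congrArg (fun v : E3 => v i) (hfr4 x hx)
    rw [dirD3_apply'] at h
    simpa [PiLp.smul_apply, PiLp.sub_apply, PiLp.add_apply, smul_eq_mul] using h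
  refine PiLp.ext fun i => ?_
  have h0 : (0 : E3) i = 0 := rfl
  rw [dirD3_apply', h0]
  have hcompeq : (fun y => ((fun z => c • (Δ₂ • p z - Δ₁ • q z)) y) i)
      = fun y => c * (Δ₂ * p y i - Δ₁ * q y i) := by
    funext y
    simp [PiLp.smul_apply, PiLp.sub_apply, smul_eq_mul]
  rw [hcompeq]
  have hdiff : DifferentiableAt ℝ (fun y => Δ₂ * p y i - Δ₁ * q y i) x :=
    ((hdp i).const_mul Δ₂).sub ((hdq i).const_mul Δ₁)
  rw [fderiv_const_mul hdiff c,
      fderiv_fun_sub ((hdp i).const_mul Δ₂) ((hdq i).const_mul Δ₁),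
      fderiv_const_mul (hdp i) Δ₂, fderiv_const_mul (hdq i) Δ₁]
  have harg : (fun z => c • (Δ₂ • p z - Δ₁ • q z)) x = c • (Δ₂ • p x - Δ₁ • q x) := rfl
  rw [harg]
  simp only [ContinuousLinearMap.smul_apply, ContinuousLinearMap.sub_apply,
    map_smul, map_sub, smul_eq_mul]
  rw [frp i, frq i, frqp i, frpq i]
  linear_combination (c ^ 2 * (Δ₁ * p x i + Δ₂ * q x i)) * hβγ

end
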